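/- Let $n, k$ be positive integers with $\gcd(k,n)=1$ and let $F$ be a finite field with $2^n$ elements. Let $\beta, \gamma \in F$ with $\beta \neq 0$. Then the linearized equation $\beta x^{2^{2k}} + \gamma x^{2^k} + \beta^{2^k} x = 0$ has at most four solutions $x \in F$. -/

import Mathlib

theorem stmt_11 (n k : ℕ) (hn : 0 < n) (hk : 0 < k) (hgcd : Nat.gcd k n = 1)
    (F : Type*) [Field F] [Fintype F] (hF : Fintype.card F = 2 ^ n)
    (β γ : F) (hβ : β ≠ 0) :
    {x : F | β * x ^ (2 ^ (2 * k)) + γ * x ^ (2 ^ k) + β ^ (2 ^ k) * x = 0}.ncard ≤ 4 := by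
  classical
  -- characteristic 2
  have h2 : (2 : F) = 0 := by
    have hc : ((Fintype.card F : F)) = 0 := FiniteField.cast_card_eq_zero F
    rw [hF] at hc
    push_cast at hc
    exact pow_eq_zero_iff hn.ne' |>.mp hc
  haveI : CharP F 2 := by
    have hr : ringChar F = 2 := CharP.ringChar_of_prime_eq_zero Nat.prime_two h2
    exact hr ▸ ringChar.charP F
  haveI : Fact (Nat.Prime 2) := ⟨Nat.prime_two⟩
  have hfadd : ∀ a b : F, (a + b) ^ (2 ^ k) = a ^ (2 ^ k) + b ^ (2 ^ k) := fun a b =>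
    add_pow_char_pow (x := a) (y := b) (p := 2) (n := k)
  have hff : ∀ a : F, (a ^ (2 ^ k)) ^ (2 ^ k) = a ^ (2 ^ (2 * k)) := by
    intro a; rw [← pow_mul, ← pow_add, two_mul]
  have hkpos : (0:ℕ) < 2 ^ k := Nat.pow_pos (n := k) (by norm_num)
  have hfzero : ∀ a : F, a ≠ 0 → a ^ (2 ^ k) ≠ 0 := fun a ha => pow_ne_zero _ ha
  -- fixed points of x ↦ x^(2^k) are 0 and 1
  have hfix : ∀ y : F, y ^ (2 ^ k) = y → y = 0 ∨ y = 1 := by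
    intro y hy
    have hsq : y ^ 2 = y := by
      have hpowk : ∀ a : ℕ, y ^ (2 ^ (k * a)) = y := by
        intro a
        induction a with
        | zero => simp
        | succ a ih =>
          have : 2 ^ (k * (a + 1)) = 2 ^ (k * a) * 2 ^ k := by rw [Nat.mul_succ, pow_add]
          rw [this, pow_mul, ih, hy]
      have hred : ∀ q r : ℕ, y ^ (2 ^ (n * q + r)) = y ^ (2 ^ r) := by
        intro q r
        induction q with
        | zero => simp
        | succ q ih =>
          have h1 : 2 ^ (n * (q + 1) + r) = 2 ^ (n * q + r) * 2 ^ n := by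
            rw [← pow_add]; ring_nf
          rw [h1, pow_mul, ih, ← hF, FiniteField.pow_card]
      rcases Nat.lt_or_ge n 2 with h1 | h1
      · have hn1 : n = 1 := by omega
        have := FiniteField.pow_card y
        rwa [hF, hn1, pow_one] at this
      · -- Euler: k^φ(n) ≡ 1 [MOD n]
        have hcop : Nat.Coprime k n := hgcd
        have heuler : k ^ Nat.totient n ≡ 1 [MOD n] := Nat.ModEq.pow_totient hcop
        set m := k ^ Nat.totient n with hm
        have ht : 1 ≤ Nat.totient n := Nat.totient_pos.mpr hn
        have hmk : m = k * k ^ (Nat.totient n - 1) := by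
          rw [hm, ← pow_succ', Nat.sub_add_cancel ht]
        have hym : y ^ (2 ^ m) = y := by rw [hmk]; exact hpowk _
        have hmod : m % n = 1 := by
          have : m % n = 1 % n := heuler
          rwa [Nat.mod_eq_of_lt h1] at this
        have hdm : n * (m / n) + m % n = m := Nat.div_add_mod m n
        calc y ^ 2 = y ^ (2 ^ (m % n)) := by rw [hmod, pow_one]
          _ = y ^ (2 ^ (n * (m / n) + m % n)) := (hred _ _).symm
          _ = y ^ (2 ^ m) := by rw [hdm]
          _ = y := hym
    have hz : y * (y - 1) = 0 := by linear_combination hsq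
    rcases mul_eq_zero.mp hz with h | h
    · exact Or.inl h
    · exact Or.inr (sub_eq_zero.mp h)

  -- helper: if u^(2^k) * v = v^(2^k) * u with v ≠ 0, then u = 0 or u = v
  have hprop : ∀ u v : F, v ≠ 0 → u ^ (2^k) * v = v ^ (2^k) * u → u = 0 ∨ u = v := by
    intro u v hv h
    have hfv : v ^ (2^k) ≠ 0 := hfzero v hv
    have hy : (u * v⁻¹) ^ (2^k) = u * v⁻¹ := by
      rw [mul_pow, inv_pow]
      field_simp
      linear_combination h
    rcases hfix _ hy with h0 | h1
    · rcases mul_eq_zero.mp h0 with h' | h'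
      · exact Or.inl h'
      · exact absurd (inv_eq_zero.mp h') hv
    · right
      field_simp at h1
      exact h1
  by_cases hex : ∃ z : F, (β * z ^ (2 ^ (2 * k)) + γ * z ^ (2 ^ k) + β ^ (2 ^ k) * z = 0) ∧ z ≠ 0
  · obtain ⟨z, hz, hz0⟩ := hex
    -- Claim A
    have hA : ∀ x : F, β * x ^ (2 ^ (2*k)) + γ * x ^ (2^k) + β ^ (2^k) * x = 0 →
        β * (z * x ^ (2^k) + z ^ (2^k) * x) ^ (2^k)
          = β ^ (2^k) * (z * x ^ (2^k) + z ^ (2^k) * x) := by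
      intro x hx
      have hexp : (z * x ^ (2^k) + z ^ (2^k) * x) ^ (2^k)
          = z ^ (2^k) * x ^ (2^(2*k)) + z ^ (2^(2*k)) * x ^ (2^k) := by
        rw [hfadd, mul_pow, mul_pow, hff, hff]
      rw [hexp]
      linear_combination (z^(2^k)) * hx + (x^(2^k)) * hz
        - (β^(2^k)*z*x^(2^k) + β^(2^k)*z^(2^k)*x + γ*z^(2^k)*x^(2^k)) * h2
    -- vanishing of w
    have hzero : ∀ x : F, z * x ^ (2^k) + z ^ (2^k) * x = 0 → x = 0 ∨ x = z := by
      intro x hxw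
      apply hprop x z hz0
      linear_combination hxw - (z^(2^k) * x) * h2
    -- fibers
    have hfib : ∀ x x' : F,
        z * x ^ (2^k) + z ^ (2^k) * x = z * x' ^ (2^k) + z ^ (2^k) * x' →
        x = x' ∨ x = x' + z := by
      intro x x' hww
      have hkey : (x + x') ^ (2^k) * z = z ^ (2^k) * (x + x') := by
        rw [hfadd]
        linear_combination hww + (z*(x')^(2^k) - z^(2^k)*x) * h2
      rcases hprop (x + x') z hz0 hkey with h0 | h1
      · exact Or.inl (by linear_combination h0 - x' * h2)
      · exact Or.inr (by linear_combination h1 - x' * h2)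
    -- all nonzero w values coincide
    have hC : ∀ x x' : F,
        β * x ^ (2 ^ (2*k)) + γ * x ^ (2^k) + β ^ (2^k) * x = 0 →
        β * x' ^ (2 ^ (2*k)) + γ * x' ^ (2^k) + β ^ (2^k) * x' = 0 →
        z * x ^ (2^k) + z ^ (2^k) * x ≠ 0 →
        z * x' ^ (2^k) + z ^ (2^k) * x' ≠ 0 →
        z * x ^ (2^k) + z ^ (2^k) * x = z * x' ^ (2^k) + z ^ (2^k) * x' := by
      intro x x' hx hx' hu hv
      have h1 := hA x hx
      have h2' := hA x' hx'
      have hkey : (z * x ^ (2^k) + z ^ (2^k) * x) ^ (2^k) * (z * x' ^ (2^k) + z ^ (2^k) * x')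
          = (z * x' ^ (2^k) + z ^ (2^k) * x') ^ (2^k) * (z * x ^ (2^k) + z ^ (2^k) * x) := by
        apply mul_left_cancel₀ hβ
        linear_combination (z * x' ^ (2^k) + z ^ (2^k) * x') * h1
          - (z * x ^ (2^k) + z ^ (2^k) * x) * h2'
      rcases hprop _ _ hv hkey with h0 | h1
      · exact absurd h0 hu
      · exact h1
    by_cases hex2 : ∃ x0 : F,
        (β * x0 ^ (2 ^ (2*k)) + γ * x0 ^ (2^k) + β ^ (2^k) * x0 = 0) ∧
        z * x0 ^ (2^k) + z ^ (2^k) * x0 ≠ 0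
    · obtain ⟨x0, hx0, hw0⟩ := hex2
      have hsub : {x : F | β * x ^ (2 ^ (2 * k)) + γ * x ^ (2 ^ k) + β ^ (2 ^ k) * x = 0}
          ⊆ {0, z, x0, x0 + z} := by
        intro x hx
        simp only [Set.mem_setOf_eq] at hx
        by_cases hwx : z * x ^ (2^k) + z ^ (2^k) * x = 0
        · rcases hzero x hwx with h | h <;> simp [h]
        · rcases hfib x x0 (hC x x0 hx hx0 hwx hw0) with h | h <;> simp [h]
      refine le_trans (Set.ncard_le_ncard hsub (Set.toFinite _)) ?_
      calc ({0, z, x0, x0 + z} : Set F).ncard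
          ≤ ({z, x0, x0 + z} : Set F).ncard + 1 := Set.ncard_insert_le _ _
        _ ≤ (({x0, x0 + z} : Set F).ncard + 1) + 1 :=
            Nat.add_le_add_right (Set.ncard_insert_le _ _) 1
        _ ≤ ((({x0 + z} : Set F).ncard + 1) + 1) + 1 :=
            Nat.add_le_add_right (Nat.add_le_add_right (Set.ncard_insert_le _ _) 1) 1
        _ ≤ 4 := by simp
    · push_neg at hex2
      have hsub : {x : F | β * x ^ (2 ^ (2 * k)) + γ * x ^ (2 ^ k) + β ^ (2 ^ k) * x = 0}
          ⊆ {0, z} := by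
        intro x hx
        simp only [Set.mem_setOf_eq] at hx
        rcases hzero x (hex2 x hx) with h | h <;> simp [h]
      refine le_trans (Set.ncard_le_ncard hsub (Set.toFinite _)) ?_
      refine le_trans (Set.ncard_insert_le _ _) ?_
      simp
  · push_neg at hex
    have hsub : {x : F | β * x ^ (2 ^ (2 * k)) + γ * x ^ (2 ^ k) + β ^ (2 ^ k) * x = 0}
        ⊆ {0} := by
      intro x hx
      simp only [Set.mem_setOf_eq] at hx
      simp [hex x hx]
    refine le_trans (Set.ncard_le_ncard hsub (Set.toFinite _)) ?_
    simp
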